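/- For all nonnegative integers m and n: \sum_{k=1}^{n} k^m F_k = n^m F_{n+2} + (-1)^{m+1} \sum_{j=0}^{m} A(m,j) F_{j+m+1} - \sum_{s=1}^{m} (-1)^{s+1} \binom{m}{s} n^{m-s} \sum_{j=1}^{s} A(s,j) F_{j+n+s+1}. -/

import Mathlib

/-- Fibonacci numbers over the integers, `F_{-n} = (-1)^{n-1} F_n`. -/
def fibZ (n : ℤ) : ℤ :=
  if 0 ≤ n then (Nat.fib n.toNat : ℤ)
  else (-1) ^ ((-n).toNat + 1) * (Nat.fib (-n).toNat : ℤ)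

/-- The Eulerian numbers `A(i,j) = ∑_{t=0}^{j} (-1)^t C(i+1,t) (j-t)^i`. -/
def eulerianA (i j : ℕ) : ℤ :=
  ∑ t ∈ Finset.range (j + 1), (-1 : ℤ) ^ t * (Nat.choose (i + 1) t) * ((j - t : ℕ) ^ i : ℤ)

open Finset

/-- (m+1)-st finite difference of a monomial of degree ≤ m vanishes. -/
lemma findiff (m : ℕ) : ∀ r ≤ m, ∀ z : ℤ,
    ∑ t ∈ Finset.range (m + 2), (-1 : ℤ) ^ t * ((m + 1).choose t) * (z - t) ^ r = 0 := by
  induction m with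
  | zero =>
    intro r hr z
    interval_cases r
    simp [Finset.sum_range_succ]
  | succ m ih =>
    intro r hr z
    have split : ∑ t ∈ Finset.range (m + 3), (-1 : ℤ) ^ t * ((m + 2).choose t) * (z - t) ^ r
        = ∑ t ∈ Finset.range (m + 2), (-1 : ℤ) ^ t * ((m + 1).choose t) *
            ((z - t) ^ r - (z - 1 - t) ^ r) := by
      have h1 : ∑ t ∈ Finset.range (m + 3), (-1 : ℤ) ^ t * ((m + 2).choose t) * (z - t) ^ r
          = (∑ i ∈ Finset.range (m + 2), (-1 : ℤ) ^ (i + 1) * ((m + 1).choose i) * (z - (i + 1)) ^ r)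
            + ∑ t ∈ Finset.range (m + 3), (-1 : ℤ) ^ t * ((m + 1).choose t) * (z - t) ^ r := by
        rw [Finset.sum_range_succ' (fun t => (-1 : ℤ) ^ t * ((m + 2).choose t) * (z - t) ^ r) (m + 2),
          Finset.sum_range_succ' (fun t => (-1 : ℤ) ^ t * ((m + 1).choose t) * (z - t) ^ r) (m + 2)]
        have hc : ∀ i, ((m + 2).choose (i + 1) : ℤ) = ((m + 1).choose i : ℤ) + ((m + 1).choose (i + 1) : ℤ) := by
          intro i; exact_mod_cast congrArg (Nat.cast (R := ℤ)) (Nat.choose_succ_succ (m + 1) i)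
        have hsplit : ∀ i ∈ Finset.range (m + 2),
            (-1 : ℤ) ^ (i + 1) * ((m + 2).choose (i + 1)) * (z - ↑(i + 1)) ^ r
            = (-1 : ℤ) ^ (i + 1) * ((m + 1).choose i) * (z - (↑i + 1)) ^ r
              + (-1 : ℤ) ^ (i + 1) * ((m + 1).choose (i + 1)) * (z - ↑(i + 1)) ^ r := by
          intro i _
          rw [hc i]
          push_cast
          ring
        rw [Finset.sum_congr rfl hsplit, Finset.sum_add_distrib]
        simp only [Nat.choose_zero_right]
        push_cast
        ring
      have h2 : ∑ t ∈ Finset.range (m + 3), (-1 : ℤ) ^ t * ((m + 1).choose t) * (z - t) ^ r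
          = ∑ t ∈ Finset.range (m + 2), (-1 : ℤ) ^ t * ((m + 1).choose t) * (z - t) ^ r := by
        rw [Finset.sum_range_succ]
        simp [Nat.choose_succ_self]
      rw [h1, h2, ← Finset.sum_add_distrib]
      apply Finset.sum_congr rfl
      intro i _
      have : z - (i + 1) = z - 1 - i := by ring
      rw [this]
      ring
    rw [split]
    rcases Nat.eq_zero_or_pos r with hr0 | hrpos
    · subst hr0; simp
    · have expand : ∀ t : ℕ, (z - t) ^ r - (z - 1 - t) ^ r
          = ∑ i ∈ Finset.range r, (r.choose i : ℤ) * (z - 1 - t) ^ i := by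
        intro t
        have hb : (z - t) = (z - 1 - t) + 1 := by ring
        rw [hb, add_pow]
        rw [Finset.sum_range_succ]
        simp [mul_comm]
      calc ∑ t ∈ Finset.range (m + 2), (-1 : ℤ) ^ t * ((m + 1).choose t) *
              ((z - t) ^ r - (z - 1 - t) ^ r)
          = ∑ t ∈ Finset.range (m + 2), ∑ i ∈ Finset.range r,
              (r.choose i : ℤ) * ((-1 : ℤ) ^ t * ((m + 1).choose t) * (z - 1 - t) ^ i) := by
            apply Finset.sum_congr rfl; intro t _
            rw [expand t, Finset.mul_sum]
            apply Finset.sum_congr rfl; intro i _; ring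
        _ = ∑ i ∈ Finset.range r, (r.choose i : ℤ) *
              ∑ t ∈ Finset.range (m + 2), (-1 : ℤ) ^ t * ((m + 1).choose t) * ((z - 1) - t) ^ i := by
            rw [Finset.sum_comm]
            apply Finset.sum_congr rfl; intro i _
            rw [Finset.mul_sum]
        _ = 0 := by
            apply Finset.sum_eq_zero; intro i hi
            simp only [Finset.mem_range] at hi
            rw [ih i (by omega) (z - 1)]
            ring

lemma eulerianA_eq_zero {m j : ℕ} (h : m < j) : eulerianA m j = 0 := by
  unfold eulerianA
  have hsub : Finset.range (m + 2) ⊆ Finset.range (j + 1) := by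
    apply Finset.range_subset_range.2; omega
  rw [← Finset.sum_subset hsub (by
    intro t ht hnt
    simp only [Finset.mem_range] at ht hnt
    have : (m + 1).choose t = 0 := Nat.choose_eq_zero_of_lt (by omega)
    simp [this])]
  have : ∀ t ∈ Finset.range (m + 2), (-1 : ℤ) ^ t * ((m + 1).choose t) * ((j - t : ℕ) ^ m : ℤ)
      = (-1 : ℤ) ^ t * ((m + 1).choose t) * ((j : ℤ) - t) ^ m := by
    intro t ht
    simp only [Finset.mem_range] at ht
    have : ((j - t : ℕ) : ℤ) = (j : ℤ) - t := by
      rw [Int.ofNat_sub (by omega)]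
    push_cast [this]
    ring
  rw [Finset.sum_congr rfl this]
  exact findiff m m le_rfl j

lemma eulerianA_zero_right {s : ℕ} (hs : 1 ≤ s) : eulerianA s 0 = 0 := by
  unfold eulerianA
  simp [zero_pow (by omega : s ≠ 0)]

lemma eulerianA_zero_zero : eulerianA 0 0 = 1 := by decide

open Polynomial Finset

noncomputable def Abar (s : ℕ) : ℤ[X] := ∑ j ∈ Finset.Icc 1 s, C (eulerianA s j) * X ^ j

noncomputable def Bp (s N : ℕ) : ℤ[X] :=
  (1 - X) ^ (s + 1) * ∑ k ∈ Finset.Icc 1 N, C ((k : ℤ) ^ s) * X ^ k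

lemma coeff_one_sub_X_pow (d a : ℕ) :
    ((1 - X : ℤ[X]) ^ d).coeff a = (-1) ^ a * d.choose a := by
  induction d generalizing a with
  | zero =>
    cases a <;> simp [coeff_one]
  | succ d ihd =>
    have h : (1 - X : ℤ[X]) ^ (d + 1) = (1 - X) ^ d - X * (1 - X) ^ d := by ring
    rw [h, coeff_sub]
    cases a with
    | zero =>
      rw [mul_coeff_zero, coeff_X_zero, ihd]
      simp
    | succ a =>
      rw [coeff_X_mul, ihd, ihd, Nat.choose_succ_succ]
      push_cast
      ring

lemma coeff_sumX (N b : ℕ) (f : ℕ → ℤ) :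
    (∑ k ∈ Finset.Icc 1 N, C (f k) * X ^ k).coeff b
      = if b ∈ Finset.Icc 1 N then f b else 0 := by
  rw [finset_sum_coeff]
  simp only [coeff_C_mul, coeff_X_pow, mul_ite, mul_one, mul_zero]
  exact Finset.sum_ite_eq (Finset.Icc 1 N) b f

lemma coeff_Bp {s N j : ℕ} (hs : 1 ≤ s) (hj : j ≤ N) : (Bp s N).coeff j = eulerianA s j := by
  unfold Bp
  rw [coeff_mul, Finset.Nat.sum_antidiagonal_eq_sum_range_succ_mk]
  unfold eulerianA
  apply Finset.sum_congr rfl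
  intro a ha
  simp only [Finset.mem_range] at ha
  rw [coeff_one_sub_X_pow, coeff_sumX]
  rcases eq_or_lt_of_le (Nat.lt_succ_iff.mp ha) with hje | hlt
  · subst hje
    have : ¬ (a - a ∈ Finset.Icc 1 N) := by simp
    rw [if_neg this]
    simp [zero_pow (by omega : s ≠ 0)]
  · have hmem : (j - a) ∈ Finset.Icc 1 N := by
      simp only [Finset.mem_Icc]; omega
    rw [if_pos hmem]

lemma coeff_Abar {s : ℕ} (hs : 1 ≤ s) (d : ℕ) : (Abar s).coeff d = eulerianA s d := by
  unfold Abar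
  rw [coeff_sumX]
  split_ifs with h
  · rfl
  · simp only [Finset.mem_Icc, not_and, not_le] at h
    rcases Nat.eq_zero_or_pos d with h0 | h1
    · subst h0; exact (eulerianA_zero_right hs).symm
    · exact (eulerianA_eq_zero (by have := h h1; omega)).symm

lemma X_pow_dvd_Bp_sub_Abar {s : ℕ} (N : ℕ) (hs : 1 ≤ s) :
    (X : ℤ[X]) ^ (N + 1) ∣ Bp s N - Abar s := by
  rw [Polynomial.X_pow_dvd_iff]
  intro d hd
  rw [coeff_sub, coeff_Bp hs (by omega), coeff_Abar hs, sub_self]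

lemma Bp_zero_eq (M : ℕ) : Bp 0 M = X - X ^ (M + 1) := by
  induction M with
  | zero => simp [Bp]
  | succ M ih =>
    unfold Bp at *
    simp only [pow_zero, map_one, pow_one] at *
    rw [Finset.sum_Icc_succ_top (by omega), mul_add, ih]
    ring

/-- Exact tail decomposition. -/
lemma BpT (m n M : ℕ) :
    Bp m (n + M) - Bp m n = X ^ n * ∑ s ∈ Finset.range (m + 1),
      C ((m.choose s : ℤ) * (n : ℤ) ^ (m - s)) * ((1 - X) ^ (m - s) * Bp s M) := by
  have hIoc : ∑ k ∈ Finset.Icc 1 (n + M), (C ((k : ℤ) ^ m) * X ^ k)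
      = (∑ k ∈ Finset.Icc 1 n, C ((k : ℤ) ^ m) * X ^ k)
        + ∑ k ∈ Finset.Ioc n (n + M), C ((k : ℤ) ^ m) * X ^ k := by
    have e1 : Finset.Icc 1 (n + M) = Finset.Ioc 0 (n + M) := by ext x; simp; omega
    have e2 : Finset.Icc 1 n = Finset.Ioc 0 n := by ext x; simp; omega
    rw [e1, e2, ← Finset.sum_Ioc_consecutive _ (Nat.zero_le n) (Nat.le_add_right n M)]
  have hreindex : ∑ k ∈ Finset.Ioc n (n + M), (C ((k : ℤ) ^ m) * X ^ k : ℤ[X])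
      = ∑ i ∈ Finset.Icc 1 M, C (((n : ℤ) + (i : ℤ)) ^ m) * (X ^ n * X ^ i) := by
    rw [show Finset.Ioc n (n + M) = (Finset.Ioc 0 M).map (addLeftEmbedding n) by
      rw [Finset.map_add_left_Ioc]; norm_num]
    rw [Finset.sum_map, show Finset.Ioc 0 M = Finset.Icc 1 M by ext x; simp; omega]
    apply Finset.sum_congr rfl
    intro i _
    simp only [addLeftEmbedding_apply]
    rw [pow_add]
    push_cast
    ring
  have hexpand : ∀ i : ℕ, (C (((n : ℤ) + (i : ℤ)) ^ m) * (X ^ n * X ^ i) : ℤ[X])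
      = ∑ s ∈ Finset.range (m + 1),
          C ((m.choose s : ℤ) * (n : ℤ) ^ (m - s)) * C ((i : ℤ) ^ s) * (X ^ n * X ^ i) := by
    intro i
    rw [add_comm ((n : ℤ)) ((i : ℤ)), add_pow, map_sum, Finset.sum_mul]
    apply Finset.sum_congr rfl
    intro s _
    rw [← map_mul]
    have : ((m.choose s : ℤ) * (n : ℤ) ^ (m - s) * (i : ℤ) ^ s)
        = (i : ℤ) ^ s * (n : ℤ) ^ (m - s) * (m.choose s : ℤ) := by ring
    rw [this]
  calc Bp m (n + M) - Bp m n
      = (1 - X) ^ (m + 1) * ∑ i ∈ Finset.Icc 1 M, C (((n : ℤ) + (i : ℤ)) ^ m) * (X ^ n * X ^ i) := by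
        unfold Bp
        rw [hIoc, mul_add, hreindex]
        ring
    _ = ∑ s ∈ Finset.range (m + 1), ∑ i ∈ Finset.Icc 1 M, (1 - X) ^ (m + 1) *
          (C ((m.choose s : ℤ) * (n : ℤ) ^ (m - s)) * C ((i : ℤ) ^ s) * (X ^ n * X ^ i)) := by
        rw [Finset.mul_sum, Finset.sum_congr rfl fun i _ => by
          rw [hexpand i, Finset.mul_sum], Finset.sum_comm]
    _ = X ^ n * ∑ s ∈ Finset.range (m + 1),
          C ((m.choose s : ℤ) * (n : ℤ) ^ (m - s)) * ((1 - X) ^ (m - s) * Bp s M) := by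
        rw [Finset.mul_sum]
        apply Finset.sum_congr rfl
        intro s hs
        simp only [Finset.mem_range] at hs
        unfold Bp
        simp only [Finset.mul_sum]
        apply Finset.sum_congr rfl
        intro i _
        have hpow : (1 - X : ℤ[X]) ^ (m + 1) = (1 - X) ^ (m - s) * (1 - X) ^ (s + 1) := by
          rw [← pow_add]
          congr 1
          omega
        rw [hpow]
        ring

lemma natDegree_one_sub_X_le : (1 - X : ℤ[X]).natDegree ≤ 1 := by
  apply (Polynomial.natDegree_sub_le _ _).trans
  simp

lemma natDegree_Abar_le (s : ℕ) : (Abar s).natDegree ≤ s := by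
  apply Polynomial.natDegree_sum_le_of_forall_le
  intro j hj
  simp only [Finset.mem_Icc] at hj
  exact (Polynomial.natDegree_C_mul_le _ _).trans
    (by rw [natDegree_X_pow]; omega)

lemma natDegree_Bp_le (s N : ℕ) : (Bp s N).natDegree ≤ N + s + 1 := by
  unfold Bp
  apply (Polynomial.natDegree_mul_le).trans
  have h1 : ((1 - X : ℤ[X]) ^ (s + 1)).natDegree ≤ s + 1 := by
    apply (Polynomial.natDegree_pow_le).trans
    have := natDegree_one_sub_X_le
    nlinarith
  have h2 : (∑ k ∈ Finset.Icc 1 N, C ((k : ℤ) ^ s) * X ^ k).natDegree ≤ N := by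
    apply Polynomial.natDegree_sum_le_of_forall_le
    intro k hk
    simp only [Finset.mem_Icc] at hk
    exact (Polynomial.natDegree_C_mul_le _ _).trans (by rw [natDegree_X_pow]; omega)
  omega

lemma main_poly (m n : ℕ) (hm : 1 ≤ m) :
    Bp m n = Abar m - X ^ n *
      (C ((n : ℤ) ^ m) * ((1 - X) ^ m * X) + ∑ s ∈ Finset.Icc 1 m,
        C ((m.choose s : ℤ) * (n : ℤ) ^ (m - s)) * ((1 - X) ^ (m - s) * Abar s)) := by
  set D : ℤ[X] := C ((n : ℤ) ^ m) * ((1 - X) ^ m * X) + ∑ s ∈ Finset.Icc 1 m,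
        C ((m.choose s : ℤ) * (n : ℤ) ^ (m - s)) * ((1 - X) ^ (m - s) * Abar s) with hD
  have hT := BpT m n (m + 1)
  have hsum : ∑ s ∈ Finset.range (m + 1),
        C ((m.choose s : ℤ) * (n : ℤ) ^ (m - s)) * ((1 - X) ^ (m - s) * Bp s (m + 1))
      = C ((n : ℤ) ^ m) * ((1 - X) ^ m * (X - X ^ (m + 2))) + ∑ s ∈ Finset.Icc 1 m,
        C ((m.choose s : ℤ) * (n : ℤ) ^ (m - s)) * ((1 - X) ^ (m - s) * Bp s (m + 1)) := by
    rw [show Finset.range (m + 1) = insert 0 (Finset.Icc 1 m) by ext x; simp; omega,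
      Finset.sum_insert (by simp)]
    congr 1
    rw [Bp_zero_eq]
    simp
  have hsplit : ∑ s ∈ Finset.Icc 1 m,
        C ((m.choose s : ℤ) * (n : ℤ) ^ (m - s)) * ((1 - X) ^ (m - s) * (Bp s (m + 1) - Abar s))
      = (∑ s ∈ Finset.Icc 1 m,
          C ((m.choose s : ℤ) * (n : ℤ) ^ (m - s)) * ((1 - X) ^ (m - s) * Bp s (m + 1)))
        - ∑ s ∈ Finset.Icc 1 m,
          C ((m.choose s : ℤ) * (n : ℤ) ^ (m - s)) * ((1 - X) ^ (m - s) * Abar s) := by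
    rw [← Finset.sum_sub_distrib]
    apply Finset.sum_congr rfl
    intro s _
    ring
  have key : Abar m - X ^ n * D - Bp m n
      = -(Bp m (n + (m + 1)) - Abar m)
        + X ^ n * (-(C ((n : ℤ) ^ m) * ((1 - X) ^ m * X ^ (m + 2)))
          + ∑ s ∈ Finset.Icc 1 m, C ((m.choose s : ℤ) * (n : ℤ) ^ (m - s)) *
              ((1 - X) ^ (m - s) * (Bp s (m + 1) - Abar s))) := by
    rw [hD]
    linear_combination hT + X ^ n * hsum - X ^ n * hsplit
  have h1 : (X : ℤ[X]) ^ (n + m + 2) ∣ Abar m - X ^ n * D - Bp m n := by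
    rw [key]
    apply dvd_add
    · apply dvd_neg.mpr
      obtain ⟨e, he⟩ := X_pow_dvd_Bp_sub_Abar (s := m) (n + m + 1) hm
      rw [show n + (m + 1) = n + m + 1 by omega, he]
      exact ⟨e, by ring⟩
    · rw [show n + m + 2 = n + (m + 2) by omega, pow_add]
      apply mul_dvd_mul_left
      apply dvd_add
      · apply dvd_neg.mpr
        exact ⟨C ((n : ℤ) ^ m) * (1 - X) ^ m, by ring⟩
      · apply Finset.dvd_sum
        intro s hs
        simp only [Finset.mem_Icc] at hs
        obtain ⟨e, he⟩ := X_pow_dvd_Bp_sub_Abar (s := s) (m + 1) hs.1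
        rw [he]
        exact ⟨C ((m.choose s : ℤ) * (n : ℤ) ^ (m - s)) * ((1 - X) ^ (m - s) * e), by ring⟩
  have h2 : (Abar m - X ^ n * D - Bp m n).natDegree ≤ n + m + 1 := by
    apply (Polynomial.natDegree_sub_le _ _).trans
    have hBp := natDegree_Bp_le m n
    have hAm := natDegree_Abar_le m
    have hXD : (X ^ n * D).natDegree ≤ n + m + 1 := by
      apply (Polynomial.natDegree_mul_le).trans
      have hDd : D.natDegree ≤ m + 1 := by
        rw [hD]
        apply (Polynomial.natDegree_add_le _ _).trans
        have ha : (C ((n : ℤ) ^ m) * ((1 - X) ^ m * X)).natDegree ≤ m + 1 := by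
          apply (Polynomial.natDegree_C_mul_le _ _).trans
          apply (Polynomial.natDegree_mul_le).trans
          have : ((1 - X : ℤ[X]) ^ m).natDegree ≤ m := by
            apply (Polynomial.natDegree_pow_le).trans
            have := natDegree_one_sub_X_le
            nlinarith
          simp only [natDegree_X]
          omega
        have hb : (∑ s ∈ Finset.Icc 1 m, C ((m.choose s : ℤ) * (n : ℤ) ^ (m - s)) *
            ((1 - X) ^ (m - s) * Abar s)).natDegree ≤ m + 1 := by
          apply Polynomial.natDegree_sum_le_of_forall_le
          intro s hs
          simp only [Finset.mem_Icc] at hs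
          apply (Polynomial.natDegree_C_mul_le _ _).trans
          apply (Polynomial.natDegree_mul_le).trans
          have hx : ((1 - X : ℤ[X]) ^ (m - s)).natDegree ≤ m - s := by
            apply (Polynomial.natDegree_pow_le).trans
            have := natDegree_one_sub_X_le
            nlinarith
          have := natDegree_Abar_le s
          omega
        omega
      simp only [natDegree_X_pow]
      omega
    have hsub : (Abar m - X ^ n * D).natDegree ≤ n + m + 1 :=
      (Polynomial.natDegree_sub_le _ _).trans (by omega)
    omega
  have h3 : Abar m - X ^ n * D - Bp m n = 0 := by
    by_contra h
    have hle := Polynomial.natDegree_le_of_dvd h1 h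
    rw [natDegree_X_pow] at hle
    omega
  have h4 : Abar m - X ^ n * D = Bp m n := sub_eq_zero.mp h3
  exact h4.symm

lemma eval_identity (x : ℝ) (hx : x ^ 2 = x + 1) (m n : ℕ) (hm : 1 ≤ m) :
    ∑ k ∈ Finset.Icc 1 n, (k : ℝ) ^ m * x ^ k
      = (n : ℝ) ^ m * x ^ (n + 2)
        + (-1) ^ (m + 1) * ∑ j ∈ Finset.range (m + 1), (eulerianA m j : ℝ) * x ^ (j + m + 1)
        - ∑ s ∈ Finset.Icc 1 m, (-1 : ℝ) ^ (s + 1) * (m.choose s : ℝ) * (n : ℝ) ^ (m - s) *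
            ∑ j ∈ Finset.Icc 1 s, (eulerianA s j : ℝ) * x ^ (j + n + s + 1) := by
  have h0 : x * (1 - x) = -1 := by linear_combination -hx
  have hev := congrArg (Polynomial.aeval x) (main_poly m n hm)
  simp only [Bp, Abar, map_mul, map_sub, map_add, map_sum, map_pow, map_one,
    Polynomial.aeval_X, Polynomial.aeval_C, algebraMap_int_eq, eq_intCast] at hev
  push_cast at hev
  simp only [map_intCast, map_natCast] at hev
  push_cast at hev
  have hm1 : (-1 : ℝ) ^ (m + 1) * (-1 : ℝ) ^ (m + 1) = 1 := by rw [← mul_pow]; norm_num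
  have hmain : ∑ k ∈ Finset.Icc 1 n, (k : ℝ) ^ m * x ^ k
      = (-1 : ℝ) ^ (m + 1) * (x ^ (m + 1) *
          ((∑ j ∈ Finset.Icc 1 m, (eulerianA m j : ℝ) * x ^ j) - x ^ n *
            ((n : ℝ) ^ m * ((1 - x) ^ m * x) + ∑ s ∈ Finset.Icc 1 m,
              (m.choose s : ℝ) * (n : ℝ) ^ (m - s) *
                ((1 - x) ^ (m - s) * ∑ j ∈ Finset.Icc 1 s, (eulerianA s j : ℝ) * x ^ j)))) := by
    have step : (-1 : ℝ) ^ (m + 1) * ∑ k ∈ Finset.Icc 1 n, (k : ℝ) ^ m * x ^ k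
        = x ^ (m + 1) * ((1 - x) ^ (m + 1) * ∑ k ∈ Finset.Icc 1 n, (k : ℝ) ^ m * x ^ k) := by
      calc (-1 : ℝ) ^ (m + 1) * ∑ k ∈ Finset.Icc 1 n, (k : ℝ) ^ m * x ^ k
          = (x * (1 - x)) ^ (m + 1) * ∑ k ∈ Finset.Icc 1 n, (k : ℝ) ^ m * x ^ k := by rw [h0]
        _ = _ := by rw [mul_pow]; ring
    calc ∑ k ∈ Finset.Icc 1 n, (k : ℝ) ^ m * x ^ k
        = ((-1 : ℝ) ^ (m + 1) * (-1 : ℝ) ^ (m + 1)) * ∑ k ∈ Finset.Icc 1 n, (k : ℝ) ^ m * x ^ k := by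
          rw [hm1, one_mul]
      _ = (-1 : ℝ) ^ (m + 1) * ((-1 : ℝ) ^ (m + 1) * ∑ k ∈ Finset.Icc 1 n, (k : ℝ) ^ m * x ^ k) := by
          ring
      _ = _ := by rw [step, hev]
  rw [hmain]
  have e1 : x ^ (m + 1) * ∑ j ∈ Finset.Icc 1 m, (eulerianA m j : ℝ) * x ^ j
      = ∑ j ∈ Finset.range (m + 1), (eulerianA m j : ℝ) * x ^ (j + m + 1) := by
    rw [show Finset.range (m + 1) = insert 0 (Finset.Icc 1 m) by ext y; simp; omega,
      Finset.sum_insert (by simp), eulerianA_zero_right hm]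
    rw [Finset.mul_sum]
    simp only [Int.cast_zero, zero_mul, zero_add]
    apply Finset.sum_congr rfl
    intro j _
    rw [show j + m + 1 = j + (m + 1) by omega, pow_add]
    ring
  have wm : ((-1 : ℝ) * (x * (1 - x))) ^ m = 1 := by rw [h0]; norm_num
  have g2 : (-1 : ℝ) ^ (m + 1) * (x ^ (m + 1) * (x ^ n *
        ((n : ℝ) ^ m * ((1 - x) ^ m * x))))
      = -((n : ℝ) ^ m * x ^ (n + 2)) := by
    calc (-1 : ℝ) ^ (m + 1) * (x ^ (m + 1) * (x ^ n * ((n : ℝ) ^ m * ((1 - x) ^ m * x))))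
        = (((-1 : ℝ) * (x * (1 - x))) ^ m) * (-((n : ℝ) ^ m * x ^ (n + 2))) := by
          rw [mul_pow, mul_pow]; ring
      _ = _ := by rw [wm, one_mul]
  have g3 : (-1 : ℝ) ^ (m + 1) * (x ^ (m + 1) * (x ^ n *
        ∑ s ∈ Finset.Icc 1 m, (m.choose s : ℝ) * (n : ℝ) ^ (m - s) *
          ((1 - x) ^ (m - s) * ∑ j ∈ Finset.Icc 1 s, (eulerianA s j : ℝ) * x ^ j)))
      = ∑ s ∈ Finset.Icc 1 m, (-1 : ℝ) ^ (s + 1) * (m.choose s : ℝ) * (n : ℝ) ^ (m - s) *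
          ∑ j ∈ Finset.Icc 1 s, (eulerianA s j : ℝ) * x ^ (j + n + s + 1) := by
    rw [Finset.mul_sum, Finset.mul_sum, Finset.mul_sum]
    apply Finset.sum_congr rfl
    intro s hs
    simp only [Finset.mem_Icc] at hs
    rw [show m + 1 = (m - s) + (s + 1) by omega]
    simp only [Finset.mul_sum]
    apply Finset.sum_congr rfl
    intro j _
    have ws : ((-1 : ℝ) * (x * (1 - x))) ^ (m - s) = 1 := by rw [h0]; norm_num
    calc (-1 : ℝ) ^ (m - s + (s + 1)) *
          (x ^ (m - s + (s + 1)) * (x ^ n * ((m.choose s : ℝ) * (n : ℝ) ^ (m - s) *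
            ((1 - x) ^ (m - s) * ((eulerianA s j : ℝ) * x ^ j)))))
        = (((-1 : ℝ) * (x * (1 - x))) ^ (m - s)) * ((-1 : ℝ) ^ (s + 1) * (m.choose s : ℝ) *
            (n : ℝ) ^ (m - s) * ((eulerianA s j : ℝ) * x ^ (j + n + s + 1))) := by
          rw [mul_pow, mul_pow]; ring
      _ = _ := by rw [ws, one_mul]
  calc (-1 : ℝ) ^ (m + 1) * (x ^ (m + 1) *
          ((∑ j ∈ Finset.Icc 1 m, (eulerianA m j : ℝ) * x ^ j) - x ^ n *
            ((n : ℝ) ^ m * ((1 - x) ^ m * x) + ∑ s ∈ Finset.Icc 1 m,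
              (m.choose s : ℝ) * (n : ℝ) ^ (m - s) *
                ((1 - x) ^ (m - s) * ∑ j ∈ Finset.Icc 1 s, (eulerianA s j : ℝ) * x ^ j))))
      = (-1 : ℝ) ^ (m + 1) * (x ^ (m + 1) * ∑ j ∈ Finset.Icc 1 m, (eulerianA m j : ℝ) * x ^ j)
        - (-1 : ℝ) ^ (m + 1) * (x ^ (m + 1) * (x ^ n * ((n : ℝ) ^ m * ((1 - x) ^ m * x))))
        - (-1 : ℝ) ^ (m + 1) * (x ^ (m + 1) * (x ^ n *
            ∑ s ∈ Finset.Icc 1 m, (m.choose s : ℝ) * (n : ℝ) ^ (m - s) *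
              ((1 - x) ^ (m - s) * ∑ j ∈ Finset.Icc 1 s, (eulerianA s j : ℝ) * x ^ j))) := by
        ring
    _ = _ := by rw [e1, g2, g3]; ring

open Finset goldenRatio in
section
lemma fibZ_natCast (a : ℕ) : fibZ (a : ℤ) = (Nat.fib a : ℤ) := by
  simp [fibZ]

lemma fibZ_shape2 (n : ℕ) : fibZ ((n : ℤ) + 2) = (Nat.fib (n + 2) : ℤ) := by
  rw [show ((n : ℤ) + 2) = ((n + 2 : ℕ) : ℤ) by push_cast; ring, fibZ_natCast]

lemma fibZ_shape3 (j m : ℕ) : fibZ ((j : ℤ) + (m : ℤ) + 1) = (Nat.fib (j + m + 1) : ℤ) := by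
  rw [show ((j : ℤ) + (m : ℤ) + 1) = ((j + m + 1 : ℕ) : ℤ) by push_cast; ring, fibZ_natCast]

lemma fibZ_shape4 (j n s : ℕ) :
    fibZ ((j : ℤ) + (n : ℤ) + (s : ℤ) + 1) = (Nat.fib (j + n + s + 1) : ℤ) := by
  rw [show ((j : ℤ) + (n : ℤ) + (s : ℤ) + 1) = ((j + n + s + 1 : ℕ) : ℤ) by push_cast; ring,
    fibZ_natCast]

lemma sum_fib_Icc (n : ℕ) :
    ∑ k ∈ Finset.Icc 1 n, (Nat.fib k : ℤ) = (Nat.fib (n + 2) : ℤ) - 1 := by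
  induction n with
  | zero => simp
  | succ n ih =>
    rw [Finset.sum_Icc_succ_top (by omega), ih]
    have h1 : Nat.fib (n + 1 + 2) = Nat.fib (n + 1) + Nat.fib (n + 1 + 1) := Nat.fib_add_two
    have h2 : Nat.fib (n + 1 + 1) = Nat.fib (n + 2) := by norm_num
    rw [h1, h2]
    push_cast
    ring

lemma sum_div_sub {α : Type} (s : Finset α) (c f g : α → ℝ) (d : ℝ) :
    ∑ a ∈ s, c a * ((f a - g a) / d) = ((∑ a ∈ s, c a * f a) - ∑ a ∈ s, c a * g a) / d := by
  rw [← Finset.sum_sub_distrib, Finset.sum_div]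
  apply Finset.sum_congr rfl
  intros
  ring

lemma fib_real (m n : ℕ) (hm : 1 ≤ m) :
    ∑ k ∈ Finset.Icc 1 n, (k : ℝ) ^ m * (Nat.fib k : ℝ)
      = (n : ℝ) ^ m * (Nat.fib (n + 2) : ℝ)
        + (-1) ^ (m + 1) * ∑ j ∈ Finset.range (m + 1),
            (eulerianA m j : ℝ) * (Nat.fib (j + m + 1) : ℝ)
        - ∑ s ∈ Finset.Icc 1 m, (-1 : ℝ) ^ (s + 1) * (m.choose s : ℝ) * (n : ℝ) ^ (m - s) *
            ∑ j ∈ Finset.Icc 1 s, (eulerianA s j : ℝ) * (Nat.fib (j + n + s + 1) : ℝ) := by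
  have hφ := eval_identity φ Real.goldenRatio_sq m n hm
  have hψ := eval_identity ψ Real.goldenConj_sq m n hm
  have h5 : (Real.sqrt 5) ≠ 0 := by
    have : (0 : ℝ) < Real.sqrt 5 := Real.sqrt_pos.mpr (by norm_num)
    linarith
  simp only [Real.coe_fib_eq]
  rw [sum_div_sub (Finset.Icc 1 n) (fun k => (k : ℝ) ^ m) (fun k => φ ^ k) (fun k => ψ ^ k),
    hφ, hψ]
  have M : ∑ j ∈ Finset.range (m + 1), (eulerianA m j : ℝ) *
        ((φ ^ (j + m + 1) - ψ ^ (j + m + 1)) / Real.sqrt 5)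
      = ((∑ j ∈ Finset.range (m + 1), (eulerianA m j : ℝ) * φ ^ (j + m + 1))
          - ∑ j ∈ Finset.range (m + 1), (eulerianA m j : ℝ) * ψ ^ (j + m + 1)) / Real.sqrt 5 :=
    sum_div_sub _ _ _ _ _
  have Souter : ∑ s ∈ Finset.Icc 1 m, (-1 : ℝ) ^ (s + 1) * (m.choose s : ℝ) * (n : ℝ) ^ (m - s) *
        ∑ j ∈ Finset.Icc 1 s, (eulerianA s j : ℝ) *
          ((φ ^ (j + n + s + 1) - ψ ^ (j + n + s + 1)) / Real.sqrt 5)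
      = ((∑ s ∈ Finset.Icc 1 m, (-1 : ℝ) ^ (s + 1) * (m.choose s : ℝ) * (n : ℝ) ^ (m - s) *
            ∑ j ∈ Finset.Icc 1 s, (eulerianA s j : ℝ) * φ ^ (j + n + s + 1))
          - ∑ s ∈ Finset.Icc 1 m, (-1 : ℝ) ^ (s + 1) * (m.choose s : ℝ) * (n : ℝ) ^ (m - s) *
            ∑ j ∈ Finset.Icc 1 s, (eulerianA s j : ℝ) * ψ ^ (j + n + s + 1)) / Real.sqrt 5 := by
    calc ∑ s ∈ Finset.Icc 1 m, (-1 : ℝ) ^ (s + 1) * (m.choose s : ℝ) * (n : ℝ) ^ (m - s) *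
          ∑ j ∈ Finset.Icc 1 s, (eulerianA s j : ℝ) *
            ((φ ^ (j + n + s + 1) - ψ ^ (j + n + s + 1)) / Real.sqrt 5)
        = ∑ s ∈ Finset.Icc 1 m, (-1 : ℝ) ^ (s + 1) * (m.choose s : ℝ) * (n : ℝ) ^ (m - s) *
            (((∑ j ∈ Finset.Icc 1 s, (eulerianA s j : ℝ) * φ ^ (j + n + s + 1))
              - ∑ j ∈ Finset.Icc 1 s, (eulerianA s j : ℝ) * ψ ^ (j + n + s + 1)) / Real.sqrt 5) :=
          Finset.sum_congr rfl (fun s _ => by rw [sum_div_sub])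
      _ = _ := sum_div_sub _ _ _ _ _
  rw [M, Souter]
  field_simp
  ring
end

theorem fib_sum_polynomial_form (m n : ℕ) :
    (∑ k ∈ Finset.Icc 1 n, (k : ℤ) ^ m * fibZ k) =
      (n : ℤ) ^ m * fibZ (n + 2)
        + (-1) ^ (m + 1) * ∑ j ∈ Finset.range (m + 1), eulerianA m j * fibZ (j + m + 1)
        - ∑ s ∈ Finset.Icc 1 m, (-1 : ℤ) ^ (s + 1) * (m.choose s : ℤ) * (n : ℤ) ^ (m - s) *
            ∑ j ∈ Finset.Icc 1 s, eulerianA s j * fibZ (j + n + s + 1) := by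
  simp only [fibZ_natCast, fibZ_shape2, fibZ_shape3, fibZ_shape4]
  rcases Nat.eq_zero_or_pos m with rfl | hm
  · simp only [pow_zero, one_mul, Nat.choose_zero_right, Finset.Icc_self]
    rw [show Finset.range (0 + 1) = {0} by rfl, Finset.sum_singleton,
      show Finset.Icc 1 0 = (∅ : Finset ℕ) by rfl, Finset.sum_empty,
      show eulerianA 0 0 = 1 by decide]
    rw [sum_fib_Icc n]
    push_cast
    ring
  · have hr := fib_real m n hm
    apply Int.cast_injective (α := ℝ)
    push_cast
    convert hr using 2 <;> push_cast <;> ring
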